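/- If π : 𝓛_{r,2} → gl(V) is a faithful representation of type (a,1,b) of the free 2-step nilpotent Lie algebra of rank r, then dim V ≥ 2r - 1. -/

import Mathlib

/-- The free 2-step nilpotent Lie algebra of rank `r`: `𝕂^r ⊕ Λ²𝕂^r`, where
`Λ²𝕂^r` is modeled by coordinates indexed by pairs `i < j`. -/
abbrev FreeNilp2 (K : Type) [Field K] (r : ℕ) : Type :=
  (Fin r → K) × ({p : Fin r × Fin r // p.1 < p.2} → K)

/-- The wedge `x ∧ y` in coordinates. -/
def wedge {K : Type} [Field K] {r : ℕ} (x y : Fin r → K) :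
    {p : Fin r × Fin r // p.1 < p.2} → K :=
  fun p => x p.1.1 * y p.1.2 - x p.1.2 * y p.1.1

noncomputable instance (K : Type) [Field K] (r : ℕ) : LieRing (FreeNilp2 K r) where
  bracket a b := (0, wedge a.1 b.1)
  add_lie a b c := by
    refine Prod.ext (by simp) (funext fun p => ?_)
    show wedge (a.1 + b.1) c.1 p = wedge a.1 c.1 p + wedge b.1 c.1 p
    simp [wedge]; ring
  lie_add a b c := by
    refine Prod.ext (by simp) (funext fun p => ?_)
    show wedge a.1 (b.1 + c.1) p = wedge a.1 b.1 p + wedge a.1 c.1 p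
    simp [wedge]; ring
  lie_self a := by
    refine Prod.ext (by simp) (funext fun p => ?_)
    show wedge a.1 a.1 p = 0
    simp [wedge]; ring
  leibniz_lie a b c := by
    refine Prod.ext (by simp) (funext fun p => ?_)
    show wedge a.1 (0 : Fin r → K) p =
      wedge (0 : Fin r → K) c.1 p + wedge b.1 (0 : Fin r → K) p
    simp [wedge]

noncomputable instance (K : Type) [Field K] (r : ℕ) : LieAlgebra K (FreeNilp2 K r) where
  lie_smul t a b := by
    refine Prod.ext (by show (0 : Fin r → K) = t • (0 : Fin r → K); simp) (funext fun p => ?_)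
    show wedge a.1 (t • b.1) p = t * wedge a.1 b.1 p
    simp [wedge]; ring

/-- The block index of a basis vector, for block sizes `a, p, b`. -/
def blk {a p b : ℕ} : Fin a ⊕ Fin p ⊕ Fin b → Fin 3
  | Sum.inl _ => 0
  | Sum.inr (Sum.inl _) => 1
  | Sum.inr (Sum.inr _) => 2

/-- A matrix is strictly block upper triangular (blocks of sizes `a, p, b`) if
its only nonzero entries lie in the blocks `(1,2)`, `(1,3)` and `(2,3)`. -/
def StrictBlockUpper {K : Type} [Field K] {a p b : ℕ}
    (M : Matrix (Fin a ⊕ Fin p ⊕ Fin b) (Fin a ⊕ Fin p ⊕ Fin b) K) : Prop :=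
  ∀ i j, ¬ blk i < blk j → M i j = 0

section Aux
variable {K : Type} [Field K] {a b : ℕ}

/-- The middle index. -/
abbrev midIdx (a b : ℕ) : Fin a ⊕ Fin 1 ⊕ Fin b := Sum.inr (Sum.inl 0)

lemma mul_entry_aux (M N : Matrix (Fin a ⊕ Fin 1 ⊕ Fin b) (Fin a ⊕ Fin 1 ⊕ Fin b) K)
    (hM : StrictBlockUpper M) (hN : StrictBlockUpper N) (u v : Fin a ⊕ Fin 1 ⊕ Fin b) :
    (M * N) u v = M u (midIdx a b) * N (midIdx a b) v := by
  rw [Matrix.mul_apply, Fintype.sum_sum_type, Fintype.sum_sum_type]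
  have h1 : ∀ k : Fin a, M u (Sum.inl k) * N (Sum.inl k) v = 0 := by
    intro k
    rw [hM u (Sum.inl k) (by rcases u with _ | u' | u' <;> simp [blk]), zero_mul]
  have h3 : ∀ k : Fin b, M u (Sum.inr (Sum.inr k)) * N (Sum.inr (Sum.inr k)) v = 0 := by
    intro k
    rw [hN (Sum.inr (Sum.inr k)) v (by rcases v with _ | v' | v' <;> simp [blk]), mul_zero]
  simp [h1, h3]

lemma comm_zero_left (M N : Matrix (Fin a ⊕ Fin 1 ⊕ Fin b) (Fin a ⊕ Fin 1 ⊕ Fin b) K)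
    (hM : StrictBlockUpper M) (hN : StrictBlockUpper N)
    (hcM : ∀ i : Fin a, M (Sum.inl i) (midIdx a b) = 0)
    (hcN : ∀ i : Fin a, N (Sum.inl i) (midIdx a b) = 0) :
    M * N - N * M = 0 := by
  have colM : ∀ u, M u (midIdx a b) = 0 := by
    rintro (i | i | i)
    · exact hcM i
    · exact hM _ _ (by simp [blk])
    · exact hM _ _ (by simp [blk])
  have colN : ∀ u, N u (midIdx a b) = 0 := by
    rintro (i | i | i)
    · exact hcN i
    · exact hN _ _ (by simp [blk])
    · exact hN _ _ (by simp [blk])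
  ext u v
  simp [Matrix.sub_apply, mul_entry_aux M N hM hN, mul_entry_aux N M hN hM, colM, colN]

lemma comm_zero_right (M N : Matrix (Fin a ⊕ Fin 1 ⊕ Fin b) (Fin a ⊕ Fin 1 ⊕ Fin b) K)
    (hM : StrictBlockUpper M) (hN : StrictBlockUpper N)
    (hrM : ∀ j : Fin b, M (midIdx a b) (Sum.inr (Sum.inr j)) = 0)
    (hrN : ∀ j : Fin b, N (midIdx a b) (Sum.inr (Sum.inr j)) = 0) :
    M * N - N * M = 0 := by
  have rowM : ∀ v, M (midIdx a b) v = 0 := by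
    rintro (j | j | j)
    · exact hM _ _ (by simp [blk])
    · exact hM _ _ (by simp [blk])
    · exact hrM j
  have rowN : ∀ v, N (midIdx a b) v = 0 := by
    rintro (j | j | j)
    · exact hN _ _ (by simp [blk])
    · exact hN _ _ (by simp [blk])
    · exact hrN j
  ext u v
  simp [Matrix.sub_apply, mul_entry_aux M N hM hN, mul_entry_aux N M hN hM, rowM, rowN]

/-- If any two vectors in the kernel of `f` are proportional (expressed via vanishing
2×2 minors), then `r ≤ m + 1`. -/
lemma key_dim {r m : ℕ} (f : (Fin r → K) →ₗ[K] (Fin m → K))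
    (h : ∀ x y : Fin r → K, f x = 0 → f y = 0 → ∀ i j, x i * y j = x j * y i) :
    r ≤ m + 1 := by
  have hker : Module.finrank K (LinearMap.ker f) ≤ 1 := by
    by_cases hz : ∀ x : LinearMap.ker f, (x : Fin r → K) = 0
    · refine finrank_le_one (0 : LinearMap.ker f) fun w => ⟨0, ?_⟩
      rw [zero_smul]
      exact (Subtype.ext (hz w)).symm
    · push_neg at hz
      obtain ⟨x, hx⟩ := hz
      obtain ⟨i0, hi0⟩ := Function.ne_iff.mp hx
      refine finrank_le_one x fun w => ⟨(w : Fin r → K) i0 / (x : Fin r → K) i0,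
        Subtype.ext (funext fun j => ?_)⟩
      have hr := h x w x.2 w.2 j i0
      have hi0' : (x : Fin r → K) i0 ≠ 0 := hi0
      show ((w : Fin r → K) i0 / (x : Fin r → K) i0) * (x : Fin r → K) j = (w : Fin r → K) j
      field_simp
      linear_combination hr
  have h1 := LinearMap.finrank_range_add_finrank_ker f
  rw [Module.finrank_fin_fun K] at h1
  have h2 : Module.finrank K (LinearMap.range f) ≤ m :=
    le_trans (Submodule.finrank_le _) (le_of_eq (Module.finrank_fin_fun K))
  omega

end Aux

attribute [local instance 100] LieRing.ofAssociativeRing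

/-- A faithful representation of type `(a, 1, b)` of the free 2-step nilpotent
Lie algebra of rank `r` has dimension at least `2r - 1`. -/
theorem type_a1b_dim_bound (K : Type) [Field K] [CharZero K] (r a b : ℕ)
    (π : FreeNilp2 K r →ₗ⁅K⁆ Matrix (Fin a ⊕ Fin 1 ⊕ Fin b) (Fin a ⊕ Fin 1 ⊕ Fin b) K)
    (hinj : Function.Injective π)
    (hblock : ∀ X : FreeNilp2 K r, StrictBlockUpper (π X)) :
    2 * r - 1 ≤ a + 1 + b := by
  -- embedding of degree-one part
  have hemb : ∀ (x y : Fin r → K) (c : K),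
      ((x + c • y, (0 : {p : Fin r × Fin r // p.1 < p.2} → K)) : FreeNilp2 K r)
        = (x, 0) + c • (y, 0) := by
    intro x y c
    refine Prod.ext rfl ?_
    show (0 : {p : Fin r × Fin r // p.1 < p.2} → K) = 0 + c • 0
    simp
  -- the wedge of two elements whose images commute is zero
  have hwedge : ∀ x y : Fin r → K,
      π (x, 0) * π (y, 0) - π (y, 0) * π (x, 0) = 0 → ∀ i j, x i * y j = x j * y i := by
    intro x y hcomm i j
    have hbr : π ⁅((x, 0) : FreeNilp2 K r), ((y, 0) : FreeNilp2 K r)⁆ = 0 := by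
      rw [LieHom.map_lie, Ring.lie_def]
      exact hcomm
    have hz : (⁅((x, 0) : FreeNilp2 K r), ((y, 0) : FreeNilp2 K r)⁆ : FreeNilp2 K r) = 0 :=
      hinj (by rw [hbr, map_zero π])
    have hw : wedge x y = 0 := congrArg Prod.snd hz
    rcases lt_trichotomy i j with hij | hij | hij
    · have := congrFun hw ⟨(i, j), hij⟩
      simp only [wedge, Pi.zero_apply] at this
      linear_combination this
    · subst hij; ring
    · have := congrFun hw ⟨(j, i), hij⟩
      simp only [wedge, Pi.zero_apply] at this
      linear_combination -this
  -- the left column map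
  let C : (Fin r → K) →ₗ[K] (Fin a → K) :=
    { toFun := fun x i => π (x, (0 : {p : Fin r × Fin r // p.1 < p.2} → K))
        (Sum.inl i) (midIdx a b)
      map_add' := by
        intro x y
        funext i
        have h0 : ((x + y, 0) : FreeNilp2 K r) = (x, 0) + (y, 0) := by
          have := hemb x y 1; simp only [one_smul] at this; exact this
        show π (x + y, 0) (Sum.inl i) (midIdx a b)
          = π (x, 0) (Sum.inl i) (midIdx a b) + π (y, 0) (Sum.inl i) (midIdx a b)
        rw [h0, map_add π, Matrix.add_apply]
      map_smul' := by
        intro c x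
        funext i
        have h0 : ((c • x, 0) : FreeNilp2 K r) = (0, 0) + c • (x, 0) := by
          have := hemb 0 x c; rwa [zero_add] at this
        have h00 : ((0, 0) : FreeNilp2 K r) = 0 := rfl
        show π (c • x, 0) (Sum.inl i) (midIdx a b) = c * π (x, 0) (Sum.inl i) (midIdx a b)
        rw [h0, h00, map_add π, map_zero π, map_smul π, zero_add, Matrix.smul_apply,
          smul_eq_mul] }
  -- the bottom row map
  let E : (Fin r → K) →ₗ[K] (Fin b → K) :=
    { toFun := fun x j => π (x, (0 : {p : Fin r × Fin r // p.1 < p.2} → K))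
        (midIdx a b) (Sum.inr (Sum.inr j))
      map_add' := by
        intro x y
        funext j
        have h0 : ((x + y, 0) : FreeNilp2 K r) = (x, 0) + (y, 0) := by
          have := hemb x y 1; simp only [one_smul] at this; exact this
        show π (x + y, 0) (midIdx a b) (Sum.inr (Sum.inr j))
          = π (x, 0) (midIdx a b) (Sum.inr (Sum.inr j))
            + π (y, 0) (midIdx a b) (Sum.inr (Sum.inr j))
        rw [h0, map_add π, Matrix.add_apply]
      map_smul' := by
        intro c x
        funext j
        have h0 : ((c • x, 0) : FreeNilp2 K r) = (0, 0) + c • (x, 0) := by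
          have := hemb 0 x c; rwa [zero_add] at this
        have h00 : ((0, 0) : FreeNilp2 K r) = 0 := rfl
        show π (c • x, 0) (midIdx a b) (Sum.inr (Sum.inr j))
          = c * π (x, 0) (midIdx a b) (Sum.inr (Sum.inr j))
        rw [h0, h00, map_add π, map_zero π, map_smul π, zero_add, Matrix.smul_apply,
          smul_eq_mul] }
  have hC : r ≤ a + 1 := by
    refine key_dim C fun x y hx hy => hwedge x y ?_
    exact comm_zero_left _ _ (hblock _) (hblock _)
      (fun i => congrFun hx i) (fun i => congrFun hy i)
  have hE : r ≤ b + 1 := by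
    refine key_dim E fun x y hx hy => hwedge x y ?_
    exact comm_zero_right _ _ (hblock _) (hblock _)
      (fun j => congrFun hx j) (fun j => congrFun hy j)
  omega
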